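/- Let n ∈ ℕ, 0 < ε ≤ 1/(2n), and let Q = [0,a_1] × [0,a_2] × ⋯ × [0,a_n] with all a_i > 0 be an ε-regular interval. Then max{a_1,…,a_n} ≤ (1/ε) · min{a_1,…,a_n}. -/

import Mathlib

open MeasureTheory Metric Set Filter
open scoped ENNReal NNReal

noncomputable section

abbrev En (n : ℕ) : Type := EuclideanSpace ℝ (Fin n)

variable {n : ℕ}

/-- The essential interior of `A`: points of Lebesgue density 1. -/
def essInterior (A : Set (En n)) : Set (En n) :=
  {x | Tendsto (fun r : ℝ => volume (A ∩ ball x r) / volume (ball x r))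
      (nhdsWithin 0 (Ioi 0)) (nhds 1)}

/-- The essential closure of `A`: points of positive upper Lebesgue density. -/
def essClosure (A : Set (En n)) : Set (En n) :=
  {x | 0 < Filter.limsup (fun r : ℝ => volume (A ∩ ball x r) / volume (ball x r))
      (nhdsWithin 0 (Ioi 0))}

/-- The essential boundary of `A`. -/
def essBoundary (A : Set (En n)) : Set (En n) := essClosure A \ essInterior A

/-- Perimeter: the `(n-1)`-dimensional Hausdorff measure of the essential boundary. -/
def perim (E : Set (En n)) : ℝ≥0∞ := μH[(n : ℝ) - 1] (essBoundary E)

/-- A bounded BV set. -/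
def IsBVSet (E : Set (En n)) : Prop :=
  MeasurableSet E ∧ Bornology.IsBounded E ∧ volume E < ⊤ ∧ perim E < ⊤

/-- A locally BV set. -/
def IsLocBVSet (A : Set (En n)) : Prop :=
  MeasurableSet A ∧ ∀ U : Set (En n), IsOpen U → Bornology.IsBounded U →
    μH[(n : ℝ) - 1] (essBoundary A ∩ U) < ⊤

/-- An admissible set: `int_* A ⊆ A ⊆ cl_* A`. -/
def IsAdmissible (A : Set (En n)) : Prop :=
  essInterior A ⊆ A ∧ A ⊆ essClosure A

/-- A charge. -/
def IsCharge (F : Set (En n) → ℝ) : Prop :=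
  (∀ A B : Set (En n), IsBVSet A → IsBVSet B → Disjoint A B → F (A ∪ B) = F A + F B) ∧
  ∀ ε : ℝ, 0 < ε → ∃ η : ℝ, 0 < η ∧ ∀ C : Set (En n), IsBVSet C →
    C ⊆ ball 0 (1 / ε) → perim C < ENNReal.ofReal (1 / ε) →
    volume C < ENNReal.ofReal η → |F C| < ε

/-- Regularity of the pair `(E, x)`. -/
def regPair (E : Set (En n)) (x : En n) : ℝ :=
  if volume E = 0 then 0
  else (volume E).toReal / (Metric.diam (E ∪ {x}) * (perim E).toReal)

/-- Regularity of the set `E`. -/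
def regSet (E : Set (En n)) : ℝ :=
  if volume E = 0 then 0
  else (volume E).toReal / (Metric.diam E * (perim E).toReal)

/-- Relative perimeter of `T` in `E`. -/
def relPerim (T E : Set (En n)) : ℝ≥0∞ :=
  μH[(n : ℝ) - 1] (essBoundary T ∩ essInterior E)

/-- `E` is `ε`-isoperimetric. -/
def IsIsoperimetric (ε : ℝ) (E : Set (En n)) : Prop :=
  ∀ T : Set (En n), IsBVSet T →
    min (perim (E ∩ T)) (perim (E \ T)) ≤ ENNReal.ofReal (1 / ε) * relPerim T E

/-- The seminorm `q̄^ε_{x,r}`. -/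
def qSem (ε : ℝ) (x : En n) (r : ℝ) (F : Set (En n) → ℝ) : ℝ≥0∞ :=
  ⨆ (E : Set (En n)) (_ : IsBVSet E ∧ IsCompact (closure E) ∧ closure E ⊆ ball x r ∧
      x ∈ essClosure E ∧ ε < regPair E x ∧ IsIsoperimetric ε E),
    ENNReal.ofReal |F E|

/-- The seminorm `p̄^ε_{x,r}`. -/
def pSem (ε : ℝ) (x : En n) (r : ℝ) (F : Set (En n) → ℝ) : ℝ≥0∞ :=
  ⨆ (E : Set (En n)) (_ : IsBVSet E ∧ IsCompact (closure E) ∧ closure E ⊆ ball x r ∧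
      ε < regPair E x),
    ENNReal.ofReal |F E|

/-- A set of σ-finite `H^{n-1}` measure. -/
def SigmaFiniteHnm1 (N : Set (En n)) : Prop :=
  ∃ f : ℕ → Set (En n), N ⊆ ⋃ i, f i ∧ ∀ i, μH[(n : ℝ) - 1] (f i) < ⊤

/-- A gage on `S`. -/
def IsGage (S : Set (En n)) (δ : En n → ℝ) : Prop :=
  (∀ x ∈ S, 0 ≤ δ x) ∧ SigmaFiniteHnm1 {x | x ∈ S ∧ δ x = 0}

/-- A packing: finitely many pairwise disjoint open balls. -/
def IsPacking {k : ℕ} (x : Fin k → En n) (r : Fin k → ℝ) : Prop :=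
  (∀ i, 0 < r i) ∧ ∀ i j : Fin k, i ≠ j → Disjoint (ball (x i) (r i)) (ball (x j) (r j))

/-- A `δ`-fine packing with tags in `S`. -/
def IsFinePacking {k : ℕ} (S : Set (En n)) (δ : En n → ℝ) (x : Fin k → En n)
    (r : Fin k → ℝ) : Prop :=
  ∀ i, x i ∈ S ∧ 2 * r i < δ (x i)

/-- `F` is an indefinite packing R* integral of `f` w.r.t. `G`, with tags in `S`
and witnessing constant `τ`. -/
def PackingRStarWith (S : Set (En n)) (τ : ℝ) (F : Set (En n) → ℝ) (f : En n → ℝ)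
    (G : Set (En n) → ℝ) : Prop :=
  ∀ ε : ℝ, 0 < ε → ∃ δ : En n → ℝ, IsGage S δ ∧
    ∀ (k : ℕ) (x : Fin k → En n) (r : Fin k → ℝ), IsPacking x r →
      IsFinePacking S δ x r →
      ∑ i, qSem ε (x i) (τ * r i) (fun E => F E - f (x i) * G E) < ENNReal.ofReal ε

/-- `F` is an indefinite packing R* integral of `f` w.r.t. `G`, with tags in `S`. -/
def PackingRStar (S : Set (En n)) (F : Set (En n) → ℝ) (f : En n → ℝ)
    (G : Set (En n) → ℝ) : Prop :=
  ∃ τ : ℝ, τ ∈ Ioc (0 : ℝ) 1 ∧ PackingRStarWith S τ F f G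

/-- `F` is an indefinite packing R integral of `f` w.r.t. `G`, with tags in `S`. -/
def PackingR (S : Set (En n)) (F : Set (En n) → ℝ) (f : En n → ℝ)
    (G : Set (En n) → ℝ) : Prop :=
  ∃ τ : ℝ, τ ∈ Ioc (0 : ℝ) 1 ∧
    ∀ ε : ℝ, 0 < ε → ∃ δ : En n → ℝ, IsGage S δ ∧
      ∀ (k : ℕ) (x : Fin k → En n) (r : Fin k → ℝ), IsPacking x r →
        IsFinePacking S δ x r →
        ∑ i, pSem ε (x i) (τ * r i) (fun E => F E - f (x i) * G E) < ENNReal.ofReal ε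


namespace RegAux

lemma abs_coord_le_dist {n : ℕ} (x y : En n) (l : Fin n) : |x l - y l| ≤ dist x y := by
  rw [EuclideanSpace.dist_eq, ← Real.dist_eq]
  rw [show dist (x l) (y l) = Real.sqrt (dist (x l) (y l) ^ 2) from
    (Real.sqrt_sq dist_nonneg).symm]
  exact Real.sqrt_le_sqrt (Finset.single_le_sum
    (f := fun i => dist (x i) (y i) ^ 2) (fun i _ => sq_nonneg _) (Finset.mem_univ l))

lemma volume_box {n : ℕ} (a : Fin n → ℝ) :
    volume {y : En n | ∀ l, y l ∈ Icc 0 (a l)} = ∏ l, ENNReal.ofReal (a l) := by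
  have e := EuclideanSpace.volume_preserving_symm_measurableEquiv_toLp (Fin n)
  have hs : MeasurableSet (Set.univ.pi fun l : Fin n => Icc 0 (a l)) :=
    MeasurableSet.univ_pi fun l => measurableSet_Icc
  have h1 : {y : En n | ∀ l, y l ∈ Icc 0 (a l)}
      = (MeasurableEquiv.toLp 2 (Fin n → ℝ)).symm ⁻¹' (Set.univ.pi fun l => Icc 0 (a l)) := by
    ext y
    simp only [Set.mem_preimage, Set.mem_pi, Set.mem_univ, forall_true_left, mem_setOf_eq]
    rfl
  rw [h1, e.measure_preimage hs.nullMeasurableSet, volume_pi_pi]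
  simp [Real.volume_Icc]

lemma volume_hyperplane {n : ℕ} (j : Fin n) (c : ℝ) : volume {y : En n | y j = c} = 0 := by
  have e := EuclideanSpace.volume_preserving_symm_measurableEquiv_toLp (Fin n)
  have hs : MeasurableSet {y : Fin n → ℝ | y j = c} :=
    measurableSet_eq_fun (measurable_pi_apply j) measurable_const
  have h1 : {y : En n | y j = c}
      = (MeasurableEquiv.toLp 2 (Fin n → ℝ)).symm ⁻¹' {y : Fin n → ℝ | y j = c} := rfl
  rw [h1, e.measure_preimage hs.nullMeasurableSet]
  exact MeasureTheory.Measure.pi_hyperplane (fun _ : Fin n => (volume : Measure ℝ)) j c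

lemma reflection_mp {n : ℕ} (j : Fin n) (c : ℝ) :
    MeasurePreserving (fun y : En n => show En n from WithLp.toLp 2 fun l => if l = j then c - y l else y l)
      (volume : Measure (En n)) (volume : Measure (En n)) := by
  classical
  have hcomp : ∀ l : Fin n, MeasurePreserving (fun t : ℝ => if l = j then c - t else t)
      volume volume := by
    intro l
    by_cases h : l = j
    · simpa [h] using Measure.measurePreserving_sub_left (volume : Measure ℝ) c
    · simp only [h, ↓reduceIte]; exact MeasurePreserving.id (volume : Measure ℝ)
  have hpi := volume_preserving_pi hcomp
  have e := EuclideanSpace.volume_preserving_symm_measurableEquiv_toLp (Fin n)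
  have esymm := MeasurePreserving.symm (MeasurableEquiv.toLp 2 (Fin n → ℝ)).symm e
  exact (esymm.comp (hpi.comp e) : _)

lemma half_ball {n : ℕ} (a : Fin n → ℝ) (j : Fin n) (x : En n)
    (hxj : x j = a j) (r : ℝ) (hr0 : 0 < r)
    (hr : ∀ l, r ≤ if l = j then a l else min (x l) (a l - x l)) :
    2 * volume ({y : En n | ∀ l, y l ∈ Icc 0 (a l)} ∩ ball x r) = volume (ball x r) := by
  classical
  set Q : Set (En n) := {y : En n | ∀ l, y l ∈ Icc 0 (a l)} with hQdef
  set L : Set (En n) := {y : En n | y j ≤ a j} with hLdef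
  set U : Set (En n) := {y : En n | a j ≤ y j} with hUdef
  have hQb : Q ∩ ball x r = L ∩ ball x r := by
    ext y
    simp only [hQdef, hLdef, mem_inter_iff, mem_setOf_eq, mem_ball]
    constructor
    · rintro ⟨hy, hb⟩; exact ⟨(hy j).2, hb⟩
    · rintro ⟨hyj, hb⟩
      refine ⟨fun l => ?_, hb⟩
      have hd : |y l - x l| < r := lt_of_le_of_lt (abs_coord_le_dist y x l) hb
      have hd' : |x l - y l| < r := by rwa [abs_sub_comm] at hd
      have hd1 : y l - x l < r := lt_of_le_of_lt (le_abs_self _) hd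
      have hd2 : x l - y l < r := lt_of_le_of_lt (le_abs_self _) hd'
      by_cases h : l = j
      · have hra : r ≤ a l := by have := hr l; rwa [if_pos h] at this
        subst h
        exact ⟨by linarith [hxj ▸ hd2], hxj ▸ hyj⟩
      · have hra := hr l
        rw [if_neg h] at hra
        have h1 : r ≤ x l := le_trans hra (min_le_left _ _)
        have h2 : r ≤ a l - x l := le_trans hra (min_le_right _ _)
        exact ⟨by linarith, by linarith⟩
  have hLm : MeasurableSet L := by
    have : MeasurableSet {y : Fin n → ℝ | y j ≤ a j} :=
      measurableSet_le (measurable_pi_apply j) measurable_const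
    exact this.preimage (MeasurableEquiv.toLp 2 (Fin n → ℝ)).symm.measurable
  set f : En n → En n := fun y => show En n from WithLp.toLp 2 fun l => if l = j then 2 * a j - y l else y l
    with hfdef
  have hf : MeasurePreserving f volume volume := reflection_mp j (2 * a j)
  have hdist : ∀ y : En n, dist (f y) x = dist y x := by
    intro y
    rw [EuclideanSpace.dist_eq, EuclideanSpace.dist_eq]
    congr 1
    refine Finset.sum_congr rfl fun l _ => ?_
    rw [Real.dist_eq, Real.dist_eq]
    by_cases h : l = j
    · subst h
      have : f y l - x l = -(y l - x l) := by
        simp only [hfdef, PiLp.toLp_apply, if_pos rfl, ↓reduceIte, hxj]; ring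
      rw [this, abs_neg]
    · have : f y l = y l := by simp only [hfdef, PiLp.toLp_apply, if_neg h]
      rw [this]
  have hpre : f ⁻¹' (L ∩ ball x r) = U ∩ ball x r := by
    ext y
    simp only [Set.mem_preimage, mem_inter_iff, mem_ball, hdist y, hLdef, hUdef, mem_setOf_eq]
    have : f y j = 2 * a j - y j := by simp only [hfdef, PiLp.toLp_apply, if_pos rfl, ↓reduceIte]
    rw [this]
    constructor
    · rintro ⟨h1, h2⟩; exact ⟨by linarith, h2⟩
    · rintro ⟨h1, h2⟩; exact ⟨by linarith, h2⟩
  have hvol_eq : volume (U ∩ ball x r) = volume (L ∩ ball x r) := by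
    rw [← hpre, hf.measure_preimage (hLm.inter measurableSet_ball).nullMeasurableSet]
  have hcover : (L ∩ ball x r) ∪ (U ∩ ball x r) = ball x r := by
    ext y
    simp only [mem_union, mem_inter_iff, hLdef, hUdef, mem_setOf_eq]
    constructor
    · rintro (⟨_, h⟩ | ⟨_, h⟩) <;> exact h
    · intro h
      rcases le_total (y j) (a j) with h' | h'
      · exact Or.inl ⟨h', h⟩
      · exact Or.inr ⟨h', h⟩
  have hinter : volume ((L ∩ ball x r) ∩ (U ∩ ball x r)) = 0 := by
    refine measure_mono_null (fun y hy => ?_) (volume_hyperplane j (a j))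
    exact le_antisymm hy.1.1 hy.2.1
  have hUm : MeasurableSet U := by
    have : MeasurableSet {y : Fin n → ℝ | a j ≤ y j} :=
      measurableSet_le measurable_const (measurable_pi_apply j)
    exact this.preimage (MeasurableEquiv.toLp 2 (Fin n → ℝ)).symm.measurable
  have hsum := measure_union_add_inter (μ := volume) (t := U ∩ ball x r) (L ∩ ball x r)
    (hUm.inter measurableSet_ball)
  rw [hcover, hinter, add_zero, hvol_eq] at hsum
  rw [hQb, two_mul]
  exact hsum.symm

lemma face_subset_essBoundary {n : ℕ} (a : Fin n → ℝ) (ha : ∀ i, 0 < a i) (j : Fin n)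
    (x : En n) (hxj : x j = a j) (hx : ∀ l, l ≠ j → x l ∈ Ioo 0 (a l)) :
    x ∈ essBoundary {y : En n | ∀ l, y l ∈ Icc 0 (a l)} := by
  classical
  set Q : Set (En n) := {y : En n | ∀ l, y l ∈ Icc 0 (a l)} with hQdef
  set ρ : ℝ := Finset.univ.inf' (Finset.univ_nonempty_iff.mpr ⟨j⟩)
    (fun l => if l = j then a l else min (x l) (a l - x l)) with hρ
  have hρ0 : 0 < ρ := by
    rw [hρ, Finset.lt_inf'_iff]
    intro l _
    by_cases h : l = j
    · simpa [h] using ha j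
    · rw [if_neg h, lt_min_iff]
      exact ⟨(hx l h).1, by linarith [(hx l h).2]⟩
  have hkey : ∀ r ∈ Ioo (0:ℝ) ρ,
      volume (Q ∩ ball x r) / volume (ball x r) = 2⁻¹ := by
    intro r hrr
    have h2 := half_ball a j x hxj r hrr.1
      (fun l => le_of_lt (lt_of_lt_of_le hrr.2 (Finset.inf'_le _ (Finset.mem_univ l))))
    have hb0 : volume (ball x r) ≠ 0 := (measure_ball_pos volume x hrr.1).ne'
    have hbt : volume (ball x r) ≠ ⊤ := measure_ball_lt_top.ne
    have hA : volume (Q ∩ ball x r) = 2⁻¹ * volume (ball x r) := by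
      rw [← h2, ← mul_assoc, ENNReal.inv_mul_cancel two_ne_zero ENNReal.ofNat_ne_top, one_mul]
    rw [hA, mul_div_assoc, ENNReal.div_self hb0 hbt, mul_one]
  have hev : (fun r : ℝ => volume (Q ∩ ball x r) / volume (ball x r))
      =ᶠ[nhdsWithin (0:ℝ) (Ioi 0)] fun _ => (2⁻¹ : ℝ≥0∞) := by
    filter_upwards [Ioo_mem_nhdsGT_of_mem (by simp [hρ0] : (0:ℝ) ∈ Ico (0:ℝ) ρ)] with r hr
    exact hkey r hr
  refine ⟨?_, ?_⟩
  · simp only [essClosure, mem_setOf_eq]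
    rw [Filter.limsup_congr hev, Filter.limsup_const]
    exact ENNReal.inv_pos.mpr ENNReal.ofNat_ne_top
  · intro hmem
    simp only [essInterior, mem_setOf_eq] at hmem
    have h1 : Tendsto (fun r : ℝ => volume (Q ∩ ball x r) / volume (ball x r))
        (nhdsWithin (0:ℝ) (Ioi 0)) (nhds (2⁻¹ : ℝ≥0∞)) :=
      Tendsto.congr' hev.symm tendsto_const_nhds
    have h2 : Tendsto (fun r : ℝ => volume (Q ∩ ball x r) / volume (ball x r))
        (nhdsWithin (0:ℝ) (Ioi 0)) (nhds (1 : ℝ≥0∞)) := hmem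
    have := tendsto_nhds_unique h1 h2
    norm_num at this

lemma perim_box_ge {n : ℕ} (hn : 1 ≤ n) (a : Fin n → ℝ) (ha : ∀ i, 0 < a i) (j : Fin n) :
    ENNReal.ofReal (∏ l ∈ Finset.univ.erase j, a l)
      ≤ perim {y : En n | ∀ l, y l ∈ Icc 0 (a l)} := by
  classical
  set Q : Set (En n) := {y : En n | ∀ l, y l ∈ Icc 0 (a l)} with hQdef
  set F : Set (En n) := {y | y j = a j ∧ ∀ l, l ≠ j → y l ∈ Ioo 0 (a l)} with hFdef
  have hF : F ⊆ essBoundary Q := fun x hx =>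
    face_subset_essBoundary a ha j x hx.1 hx.2
  set g : En n → ({l : Fin n // l ≠ j} → ℝ) := fun y l => y l.1 with hgdef
  have hg : LipschitzWith 1 g := by
    apply LipschitzWith.mk_one
    intro y z
    refine (dist_pi_le_iff dist_nonneg).2 fun l => ?_
    rw [Real.dist_eq]
    exact abs_coord_le_dist y z l.1
  have hd : (0:ℝ) ≤ (n:ℝ) - 1 := by
    have : (1:ℝ) ≤ (n:ℝ) := by exact_mod_cast hn
    linarith
  have himg : μH[(n:ℝ)-1] (g '' F) ≤ μH[(n:ℝ)-1] (essBoundary Q) := by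
    calc μH[(n:ℝ)-1] (g '' F) ≤ ((1:ℝ≥0) : ℝ≥0∞) ^ ((n:ℝ)-1) * μH[(n:ℝ)-1] F :=
          hg.hausdorffMeasure_image_le hd F
      _ = μH[(n:ℝ)-1] F := by simp
      _ ≤ μH[(n:ℝ)-1] (essBoundary Q) := measure_mono hF
  have hbox : (Set.univ.pi fun l : {l : Fin n // l ≠ j} => Ioo 0 (a l.1)) ⊆ g '' F := by
    intro z hz
    refine ⟨show En n from WithLp.toLp 2 fun l => if h : l = j then a j else z ⟨l, h⟩, ⟨by simp, ?_⟩, ?_⟩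
    · intro l hl
      simpa [hl] using hz ⟨l, hl⟩ (Set.mem_univ _)
    · funext l
      simp only [hgdef, PiLp.toLp_apply]
      rw [dif_neg l.2]
  have hcard : ((n:ℝ) - 1) = ((Fintype.card {l : Fin n // l ≠ j} : ℕ) : ℝ) := by
    have hc : Fintype.card {l : Fin n // l ≠ j} = n - 1 := by
      have := Fintype.card_subtype_compl (fun l : Fin n => l = j)
      simpa [Fintype.card_subtype_eq] using this
    rw [hc, Nat.cast_sub hn, Nat.cast_one]
  have hμbox : μH[(n:ℝ)-1] (Set.univ.pi fun l : {l : Fin n // l ≠ j} => Ioo 0 (a l.1))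
      = ENNReal.ofReal (∏ l ∈ Finset.univ.erase j, a l) := by
    rw [hcard, hausdorffMeasure_pi_real, volume_pi_pi]
    simp only [Real.volume_Ioo, sub_zero]
    rw [ENNReal.ofReal_prod_of_nonneg (fun i _ => (ha i).le)]
    rw [Finset.prod_subtype (p := fun l : Fin n => l ≠ j) (Finset.univ.erase j)
      (fun x => by simp [Finset.mem_erase]) (fun l => ENNReal.ofReal (a l))]
  calc ENNReal.ofReal (∏ l ∈ Finset.univ.erase j, a l)
      = μH[(n:ℝ)-1] (Set.univ.pi fun l : {l : Fin n // l ≠ j} => Ioo 0 (a l.1)) := hμbox.symm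
    _ ≤ μH[(n:ℝ)-1] (g '' F) := measure_mono hbox
    _ ≤ μH[(n:ℝ)-1] (essBoundary Q) := himg
    _ = perim Q := rfl

end RegAux
/-- If `0 < ε ≤ 1/(2n)` and `Q = ∏ [0,aᵢ]` (all `aᵢ > 0`) is an `ε`-regular interval,
then `max aᵢ ≤ (1/ε)·min aᵢ`, i.e. `aᵢ ≤ (1/ε)·aⱼ` for all `i, j`. -/
theorem regular_interval_sides {n : ℕ} (hn : 1 ≤ n)
    (ε : ℝ) (hε : 0 < ε) (hε' : ε ≤ 1 / (2 * n))
    (a : Fin n → ℝ) (ha : ∀ i, 0 < a i)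
    (Q : Set (En n)) (hQ : Q = {y : En n | ∀ l, y l ∈ Icc 0 (a l)})
    (hreg : ε < regSet Q) :
    ∀ i j : Fin n, a i ≤ (1 / ε) * a j := by
  intro i j
  classical
  have hvol : volume Q = ∏ l, ENNReal.ofReal (a l) := by
    rw [hQ]; exact RegAux.volume_box a
  have hvney : volume Q ≠ 0 := by
    rw [hvol, Finset.prod_ne_zero_iff]
    intro l _
    simpa using (ha l)
  unfold regSet at hreg
  rw [if_neg hvney] at hreg
  have hv : (volume Q).toReal = ∏ l, a l := by
    rw [hvol, ENNReal.toReal_prod]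
    exact Finset.prod_congr rfl fun l _ => ENNReal.toReal_ofReal (ha l).le
  have hvpos : 0 < (volume Q).toReal := by
    rw [hv]; exact Finset.prod_pos fun l _ => ha l
  have hdp : 0 < Metric.diam Q * (perim Q).toReal := by
    by_contra h
    push_neg at h
    have h0 : Metric.diam Q * (perim Q).toReal = 0 :=
      le_antisymm h (mul_nonneg Metric.diam_nonneg ENNReal.toReal_nonneg)
    rw [h0, div_zero] at hreg
    linarith
  have hbQ : Bornology.IsBounded Q := by
    rw [hQ]
    refine (Metric.isBounded_closedBall (x := (0 : En n))
      (r := Real.sqrt (∑ l, a l ^ 2))).subset fun y hy => ?_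
    rw [Metric.mem_closedBall, dist_zero_right, EuclideanSpace.norm_eq]
    refine Real.sqrt_le_sqrt (Finset.sum_le_sum fun l _ => ?_)
    have h1 := (hy l).1
    have h2 := (hy l).2
    rw [Real.norm_eq_abs, sq_abs]
    nlinarith
  have h0Q : (0 : En n) ∈ Q := by
    rw [hQ]
    intro l
    exact ⟨le_refl 0, (ha l).le⟩
  have hsingle : (EuclideanSpace.single i (a i) : En n) ∈ Q := by
    rw [hQ]
    intro l
    rw [EuclideanSpace.single_apply]
    by_cases h : l = i
    · simp [h, (ha i).le]
    · simp [h, le_refl, (ha l).le]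
  have hdiam : a i ≤ Metric.diam Q := by
    have := Metric.dist_le_diam_of_mem hbQ hsingle h0Q
    rwa [dist_zero_right, EuclideanSpace.norm_single, Real.norm_eq_abs,
      abs_of_pos (ha i)] at this
  have hperim_lb : ENNReal.ofReal (∏ l ∈ Finset.univ.erase j, a l) ≤ perim Q := by
    rw [hQ]; exact RegAux.perim_box_ge hn a ha j
  have hptop : perim Q ≠ ⊤ := by
    intro h
    have h0 : (perim Q).toReal = 0 := by simp [h]
    rw [h0, mul_zero] at hdp
    exact lt_irrefl 0 hdp
  have hPpos : 0 < ∏ l ∈ Finset.univ.erase j, a l :=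
    Finset.prod_pos fun l _ => ha l
  have hpP : ∏ l ∈ Finset.univ.erase j, a l ≤ (perim Q).toReal := by
    calc ∏ l ∈ Finset.univ.erase j, a l
        = (ENNReal.ofReal (∏ l ∈ Finset.univ.erase j, a l)).toReal :=
          (ENNReal.toReal_ofReal hPpos.le).symm
      _ ≤ (perim Q).toReal := ENNReal.toReal_mono hptop hperim_lb
  have key : ε < a j / a i := by
    calc ε < (volume Q).toReal / (Metric.diam Q * (perim Q).toReal) := hreg
      _ ≤ (volume Q).toReal / (a i * ∏ l ∈ Finset.univ.erase j, a l) := by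
          apply div_le_div_of_nonneg_left hvpos.le
          · exact mul_pos (ha i) hPpos
          · exact mul_le_mul hdiam hpP hPpos.le Metric.diam_nonneg
      _ = (a j * ∏ l ∈ Finset.univ.erase j, a l)
            / (a i * ∏ l ∈ Finset.univ.erase j, a l) := by
          rw [hv, ← Finset.mul_prod_erase Finset.univ a (Finset.mem_univ j)]
      _ = a j / a i := mul_div_mul_right _ _ hPpos.ne'
  have hmul : ε * a i < a j := by
    have := (lt_div_iff₀ (ha i)).1 key
    linarith
  have : a i ≤ a j / ε := (le_div_iff₀ hε).2 (by linarith)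
  rwa [div_eq_mul_inv, mul_comm, ← one_div] at this
end
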